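/- In the lambda calculus with pair/fst/snd as above, the full PVS-Cert conversion ≡ (the equivalence generated by β, the fst-projection rule, and proof irrelevance of pairs) is contained in →_{βπ}* ∘ =_pi ∘ ←_{βπ}*: any two ≡-equivalent terms reduce by βπ to terms that are =_pi-equivalent. -/

import Mathlib

/-- Untyped λ-terms (de Bruijn) extended with a 4-ary pair constructor and
3-ary left/right projections. -/
inductive Tm : Type
  | var : Nat → Tm
  | app : Tm → Tm → Tm
  | lam : Tm → Tm → Tm                 -- λ(x : T). M
  | pair : Tm → Tm → Tm → Tm → Tm      -- ⟨T, P, m, h⟩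
  | fst : Tm → Tm → Tm → Tm            -- π₁(T, P, m)
  | snd : Tm → Tm → Tm → Tm            -- π₂(T, P, m)

namespace Tm

/-- Shift the free variables `≥ k` by `d`. -/
def lift (d k : Nat) : Tm → Tm
  | var n => if n < k then var n else var (n + d)
  | app m n => app (lift d k m) (lift d k n)
  | lam t m => lam (lift d k t) (lift d (k + 1) m)
  | pair t p m h => pair (lift d k t) (lift d k p) (lift d k m) (lift d k h)
  | fst t p m => fst (lift d k t) (lift d k p) (lift d k m)
  | snd t p m => snd (lift d k t) (lift d k p) (lift d k m)

/-- Capture-avoiding substitution of `s` for variable `k`. -/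
def subst (k : Nat) (s : Tm) : Tm → Tm
  | var n => if n = k then lift k 0 s else if k < n then var (n - 1) else var n
  | app m n => app (subst k s m) (subst k s n)
  | lam t m => lam (subst k s t) (subst (k + 1) s m)
  | pair t p m h => pair (subst k s t) (subst k s p) (subst k s m) (subst k s h)
  | fst t p m => fst (subst k s t) (subst k s p) (subst k s m)
  | snd t p m => snd (subst k s t) (subst k s p) (subst k s m)

/-- One-step βπ-reduction: β plus `fst(T₀,P₀,⟨T₁,P₁,m,h⟩) → m`,
closed under contexts. -/
inductive Step : Tm → Tm → Prop
  | beta (t m n : Tm) : Step (app (lam t m) n) (subst 0 n m)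
  | proj (t₀ p₀ t₁ p₁ m h : Tm) : Step (fst t₀ p₀ (pair t₁ p₁ m h)) m
  | appL {m m'} (n) : Step m m' → Step (app m n) (app m' n)
  | appR (m) {n n'} : Step n n' → Step (app m n) (app m n')
  | lamT {t t'} (m) : Step t t' → Step (lam t m) (lam t' m)
  | lamM (t) {m m'} : Step m m' → Step (lam t m) (lam t m')
  | pair₁ {t t'} (p m h) : Step t t' → Step (pair t p m h) (pair t' p m h)
  | pair₂ (t) {p p'} (m h) : Step p p' → Step (pair t p m h) (pair t p' m h)
  | pair₃ (t p) {m m'} (h) : Step m m' → Step (pair t p m h) (pair t p m' h)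
  | pair₄ (t p m) {h h'} : Step h h' → Step (pair t p m h) (pair t p m h')
  | fst₁ {t t'} (p m) : Step t t' → Step (fst t p m) (fst t' p m)
  | fst₂ (t) {p p'} (m) : Step p p' → Step (fst t p m) (fst t p' m)
  | fst₃ (t p) {m m'} : Step m m' → Step (fst t p m) (fst t p m')
  | snd₁ {t t'} (p m) : Step t t' → Step (snd t p m) (snd t' p m)
  | snd₂ (t) {p p'} (m) : Step p p' → Step (snd t p m) (snd t p' m)
  | snd₃ (t p) {m m'} : Step m m' → Step (snd t p m) (snd t p m')

/-- One-step proof-irrelevance relation: change the proof component of a pair,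
closed under contexts. It is symmetric by construction. -/
inductive PiStep : Tm → Tm → Prop
  | pi (t p m h₀ h₁ : Tm) : PiStep (pair t p m h₀) (pair t p m h₁)
  | appL {m m'} (n) : PiStep m m' → PiStep (app m n) (app m' n)
  | appR (m) {n n'} : PiStep n n' → PiStep (app m n) (app m n')
  | lamT {t t'} (m) : PiStep t t' → PiStep (lam t m) (lam t' m)
  | lamM (t) {m m'} : PiStep m m' → PiStep (lam t m) (lam t m')
  | pair₁ {t t'} (p m h) : PiStep t t' → PiStep (pair t p m h) (pair t' p m h)
  | pair₂ (t) {p p'} (m h) : PiStep p p' → PiStep (pair t p m h) (pair t p' m h)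
  | pair₃ (t p) {m m'} (h) : PiStep m m' → PiStep (pair t p m h) (pair t p m' h)
  | fst₁ {t t'} (p m) : PiStep t t' → PiStep (fst t p m) (fst t' p m)
  | fst₂ (t) {p p'} (m) : PiStep p p' → PiStep (fst t p m) (fst t p' m)
  | fst₃ (t p) {m m'} : PiStep m m' → PiStep (fst t p m) (fst t p m')
  | snd₁ {t t'} (p m) : PiStep t t' → PiStep (snd t p m) (snd t' p m)
  | snd₂ (t) {p p'} (m) : PiStep p p' → PiStep (snd t p m) (snd t p' m)
  | snd₃ (t p) {m m'} : PiStep m m' → PiStep (snd t p m) (snd t p m')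

end Tm
namespace Tm

theorem lift_zero (t : Tm) : ∀ k, lift 0 k t = t := by
  induction t <;> intro k <;> simp [lift, *]

theorem lift_lift {e d : Nat} (t : Tm) : ∀ k j, k ≤ j → j ≤ k + d →
    lift e j (lift d k t) = lift (d + e) k t := by
  induction t with
  | var n =>
    intro k j h1 h2
    simp only [lift]
    split_ifs <;> (try simp only [lift, subst]) <;> (try split_ifs) <;> (try simp) <;> omega
  | app a b iha ihb =>
    intro k j h1 h2
    simp [lift, iha _ _ h1 h2, ihb _ _ h1 h2]
  | lam a b iha ihb =>
    intro k j h1 h2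
    simp [lift, iha _ _ h1 h2, ihb (k+1) (j+1) (by omega) (by omega)]
  | pair a b c e2 iha ihb ihc ihe =>
    intro k j h1 h2
    simp [lift, iha _ _ h1 h2, ihb _ _ h1 h2, ihc _ _ h1 h2, ihe _ _ h1 h2]
  | fst a b c iha ihb ihc =>
    intro k j h1 h2
    simp [lift, iha _ _ h1 h2, ihb _ _ h1 h2, ihc _ _ h1 h2]
  | snd a b c iha ihb ihc =>
    intro k j h1 h2
    simp [lift, iha _ _ h1 h2, ihb _ _ h1 h2, ihc _ _ h1 h2]

theorem lift_lift_comm {e d : Nat} (t : Tm) : ∀ k j, j ≤ k →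
    lift e j (lift d k t) = lift d (k + e) (lift e j t) := by
  induction t with
  | var n =>
    intro k j h
    simp only [lift]
    split_ifs <;> (try simp only [lift, subst]) <;> (try split_ifs) <;> (try simp) <;> omega
  | app a b iha ihb =>
    intro k j h
    simp [lift, iha _ _ h, ihb _ _ h]
  | lam a b iha ihb =>
    intro k j h
    have h2 := ihb (k+1) (j+1) (by omega)
    simp only [lift, iha _ _ h]
    rw [h2]
    congr 2
    omega
  | pair a b c e2 iha ihb ihc ihe =>
    intro k j h
    simp [lift, iha _ _ h, ihb _ _ h, ihc _ _ h, ihe _ _ h]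
  | fst a b c iha ihb ihc =>
    intro k j h
    simp [lift, iha _ _ h, ihb _ _ h, ihc _ _ h]
  | snd a b c iha ihb ihc =>
    intro k j h
    simp [lift, iha _ _ h, ihb _ _ h, ihc _ _ h]

theorem subst_lift_cancel {d : Nat} {a : Tm} (t : Tm) : ∀ k j, k ≤ j → j ≤ k + d →
    subst j a (lift (d+1) k t) = lift d k t := by
  induction t with
  | var n =>
    intro k j h1 h2
    simp only [lift]
    split_ifs <;> (try simp only [lift, subst]) <;> (try split_ifs) <;> (try simp) <;> omega
  | app m n ihm ihn =>
    intro k j h1 h2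
    simp [lift, subst, ihm _ _ h1 h2, ihn _ _ h1 h2]
  | lam m n ihm ihn =>
    intro k j h1 h2
    simp [lift, subst, ihm _ _ h1 h2, ihn (k+1) (j+1) (by omega) (by omega)]
  | pair m n o p ihm ihn iho ihp =>
    intro k j h1 h2
    simp [lift, subst, ihm _ _ h1 h2, ihn _ _ h1 h2, iho _ _ h1 h2, ihp _ _ h1 h2]
  | fst m n o ihm ihn iho =>
    intro k j h1 h2
    simp [lift, subst, ihm _ _ h1 h2, ihn _ _ h1 h2, iho _ _ h1 h2]
  | snd m n o ihm ihn iho =>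
    intro k j h1 h2
    simp [lift, subst, ihm _ _ h1 h2, ihn _ _ h1 h2, iho _ _ h1 h2]

theorem subst_lift_high {d : Nat} {s : Tm} (t : Tm) : ∀ k m, k ≤ m →
    subst (m + d) s (lift d k t) = lift d k (subst m s t) := by
  induction t with
  | var n =>
    intro k m h
    simp only [lift, subst]
    rcases Nat.lt_trichotomy n m with h' | rfl | h'
    · split_ifs <;> (try simp only [lift, subst]) <;> (try split_ifs) <;> (try simp) <;> omega
    · have e1 : lift d k (lift n 0 s) = lift (n + d) 0 s :=
        lift_lift s 0 k (by omega) (by omega)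
      simp [subst, lift, show ¬ n < k from by omega, e1]
    · split_ifs <;> (try simp only [lift, subst]) <;> (try split_ifs) <;> (try simp) <;> omega
  | app a b iha ihb =>
    intro k m h
    simp [lift, subst, iha _ _ h, ihb _ _ h]
  | lam a b iha ihb =>
    intro k m h
    have h2 := ihb (k+1) (m+1) (by omega)
    rw [show m + 1 + d = m + d + 1 from by omega] at h2
    simp only [lift, subst, iha _ _ h, h2]
  | pair a b c e iha ihb ihc ihe =>
    intro k m h
    simp [lift, subst, iha _ _ h, ihb _ _ h, ihc _ _ h, ihe _ _ h]
  | fst a b c iha ihb ihc =>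
    intro k m h
    simp [lift, subst, iha _ _ h, ihb _ _ h, ihc _ _ h]
  | snd a b c iha ihb ihc =>
    intro k m h
    simp [lift, subst, iha _ _ h, ihb _ _ h, ihc _ _ h]

theorem lift_subst {d : Nat} {s : Tm} (t : Tm) : ∀ k j,
    lift d (k + j) (subst j s t) = subst j (lift d k s) (lift d (k + j + 1) t) := by
  induction t with
  | var n =>
    intro k j
    simp only [subst, lift]
    rcases Nat.lt_trichotomy n j with h' | rfl | h'
    · split_ifs <;> (try simp only [lift, subst]) <;> (try split_ifs) <;> (try simp) <;> omega
    · have e1 : lift n 0 (lift d k s) = lift d (k + n) (lift n 0 s) :=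
        lift_lift_comm s k 0 (by omega)
      simp [subst, lift, show n < k + n + 1 from by omega, e1]
    · split_ifs <;> (try simp only [lift, subst]) <;> (try split_ifs) <;> (try simp) <;> omega
  | app a b iha ihb =>
    intro k j
    simp [lift, subst, iha, ihb]
  | lam a b iha ihb =>
    intro k j
    have h2 := ihb k (j+1)
    simp only [lift, subst, iha]
    rw [(by ring : k + j + 1 = k + (j+1)), h2, (by ring : k + (j + 1) + 1 = k + j + 1 + 1)]
  | pair a b c e iha ihb ihc ihe =>
    intro k j
    simp [lift, subst, iha, ihb, ihc, ihe]
  | fst a b c iha ihb ihc =>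
    intro k j
    simp [lift, subst, iha, ihb, ihc]
  | snd a b c iha ihb ihc =>
    intro k j
    simp [lift, subst, iha, ihb, ihc]

theorem subst_subst {s n : Tm} (t : Tm) : ∀ k j,
    subst (j + k) s (subst j n t) = subst j (subst k s n) (subst (j + k + 1) s t) := by
  induction t with
  | var v =>
    intro k j
    simp only [subst]
    rcases Nat.lt_trichotomy v j with h' | rfl | h'
    · split_ifs <;> (try simp only [lift, subst]) <;> (try split_ifs) <;> (try simp) <;> omega
    · have e1 : subst (k + v) s (lift v 0 n) = lift v 0 (subst k s n) :=
        subst_lift_high n 0 k (by omega)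
      simp [subst, show v + k = k + v from by ring, show ¬ v = v + k + 1 from by omega,
        show ¬ v + k + 1 < v from by omega, show ¬ v = k + v + 1 from by omega,
        show ¬ k + v + 1 < v from by omega, e1]
    · rcases Nat.lt_trichotomy v (j + k + 1) with h'' | rfl | h''
      · split_ifs <;> (try simp only [lift, subst]) <;> (try split_ifs) <;> (try simp) <;> omega
      · have e1 : subst j (subst k s n) (lift (j + k + 1) 0 s) = lift (j + k) 0 s :=
          subst_lift_cancel (d := j + k) s 0 j (by omega) (by omega)
        simp [subst, show ¬ (j + k + 1 = j) from by omega, show j < j + k + 1 from by omega, e1]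
      · split_ifs <;> (try simp only [lift, subst]) <;> (try split_ifs) <;> (try simp) <;> omega
  | app a b iha ihb =>
    intro k j
    simp [subst, iha, ihb]
  | lam a b iha ihb =>
    intro k j
    have h2 := ihb k (j+1)
    simp only [subst, iha]
    rw [(by ring : j + k + 1 = (j + 1) + k), h2, (by ring : j + 1 + k + 1 = j + k + 1 + 1)]
  | pair a b c e iha ihb ihc ihe =>
    intro k j
    simp [subst, iha, ihb, ihc, ihe]
  | fst a b c iha ihb ihc =>
    intro k j
    simp [subst, iha, ihb, ihc]
  | snd a b c iha ihb ihc =>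
    intro k j
    simp [subst, iha, ihb, ihc]

end Tm
namespace Tm

inductive Par : Tm → Tm → Prop
  | var (n) : Par (var n) (var n)
  | app {m m' n n'} : Par m m' → Par n n' → Par (app m n) (app m' n')
  | lam {t t' m m'} : Par t t' → Par m m' → Par (lam t m) (lam t' m')
  | pair {t t' p p' m m' h h'} : Par t t' → Par p p' → Par m m' → Par h h' →
      Par (pair t p m h) (pair t' p' m' h')
  | fst {t t' p p' m m'} : Par t t' → Par p p' → Par m m' →
      Par (fst t p m) (fst t' p' m')
  | snd {t t' p p' m m'} : Par t t' → Par p p' → Par m m' →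
      Par (snd t p m) (snd t' p' m')
  | beta (t) {m m' n n'} : Par m m' → Par n n' →
      Par (app (lam t m) n) (subst 0 n' m')
  | proj (t₀ p₀ t₁ p₁ h) {m m'} : Par m m' →
      Par (fst t₀ p₀ (pair t₁ p₁ m h)) m'

theorem Par.refl : ∀ t : Tm, Par t t := by
  intro t
  induction t with
  | var n => exact Par.var n
  | app a b iha ihb => exact Par.app iha ihb
  | lam a b iha ihb => exact Par.lam iha ihb
  | pair a b c d iha ihb ihc ihd => exact Par.pair iha ihb ihc ihd
  | fst a b c iha ihb ihc => exact Par.fst iha ihb ihc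
  | snd a b c iha ihb ihc => exact Par.snd iha ihb ihc

theorem Par.lift {m m' : Tm} (h : Par m m') : ∀ d k, Par (lift d k m) (lift d k m') := by
  induction h with
  | var n =>
    intro d k
    exact Par.refl _
  | app _ _ ihm ihn =>
    intro d k
    exact Par.app (ihm d k) (ihn d k)
  | lam _ _ iht ihm =>
    intro d k
    exact Par.lam (iht d k) (ihm d (k+1))
  | pair _ _ _ _ ih1 ih2 ih3 ih4 =>
    intro d k
    exact Par.pair (ih1 d k) (ih2 d k) (ih3 d k) (ih4 d k)
  | fst _ _ _ ih1 ih2 ih3 =>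
    intro d k
    exact Par.fst (ih1 d k) (ih2 d k) (ih3 d k)
  | snd _ _ _ ih1 ih2 ih3 =>
    intro d k
    exact Par.snd (ih1 d k) (ih2 d k) (ih3 d k)
  | @beta t mm mm' nn nn' _ _ ihm ihn =>
    intro d k
    have e := lift_subst (d := d) (s := nn') mm' k 0
    simp only [Nat.add_zero] at e
    simp only [Tm.lift]
    rw [e]
    exact Par.beta _ (ihm d (k+1)) (ihn d k)
  | proj t₀ p₀ t₁ p₁ hh _ ihm =>
    intro d k
    exact Par.proj _ _ _ _ _ (ihm d k)

theorem Par.subst' {s s' m m' : Tm} (hs : Par s s') (h : Par m m') :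
    ∀ k, Par (subst k s m) (subst k s' m') := by
  induction h with
  | var n =>
    intro k
    by_cases hn : n = k
    · simp only [Tm.subst, if_pos hn]
      exact hs.lift _ _
    · simp only [Tm.subst, if_neg hn]
      split_ifs <;> exact Par.refl _
  | app _ _ ihm ihn =>
    intro k
    exact Par.app (ihm k) (ihn k)
  | lam _ _ iht ihm =>
    intro k
    exact Par.lam (iht k) (ihm (k+1))
  | pair _ _ _ _ ih1 ih2 ih3 ih4 =>
    intro k
    exact Par.pair (ih1 k) (ih2 k) (ih3 k) (ih4 k)
  | fst _ _ _ ih1 ih2 ih3 =>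
    intro k
    exact Par.fst (ih1 k) (ih2 k) (ih3 k)
  | snd _ _ _ ih1 ih2 ih3 =>
    intro k
    exact Par.snd (ih1 k) (ih2 k) (ih3 k)
  | @beta t mm mm' nn nn' _ _ ihm ihn =>
    intro k
    have e := subst_subst (s := s') (n := nn') mm' k 0
    simp only [Nat.zero_add] at e
    simp only [Tm.subst]
    rw [e]
    exact Par.beta _ (ihm (k+1)) (ihn k)
  | proj t₀ p₀ t₁ p₁ hh _ ihm =>
    intro k
    exact Par.proj _ _ _ _ _ (ihm k)

/-- Complete development. -/
def cd : Tm → Tm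
  | var n => var n
  | app (lam _ m) n => subst 0 (cd n) (cd m)
  | app m n => app (cd m) (cd n)
  | lam t m => lam (cd t) (cd m)
  | pair t p m h => pair (cd t) (cd p) (cd m) (cd h)
  | fst _ _ (pair _ _ m _) => cd m
  | fst t p m => fst (cd t) (cd p) (cd m)
  | snd t p m => snd (cd t) (cd p) (cd m)

theorem par_cd {a b : Tm} (h : Par a b) : Par b (cd a) := by
  induction h with
  | var n => exact Par.var n
  | @app m m' n n' hm hn ihm ihn =>
    match m, hm, ihm with
    | Tm.lam t q, hm, ihm =>
      cases hm with
      | lam ht hq =>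
        cases ihm with
        | lam iht ihq =>
          exact Par.beta _ ihq ihn
    | Tm.var i, hm, ihm => exact Par.app ihm ihn
    | Tm.app x y, hm, ihm => exact Par.app ihm ihn
    | Tm.pair x y z w, hm, ihm => exact Par.app ihm ihn
    | Tm.fst x y z, hm, ihm => exact Par.app ihm ihn
    | Tm.snd x y z, hm, ihm => exact Par.app ihm ihn
  | lam _ _ iht ihm => exact Par.lam iht ihm
  | pair _ _ _ _ ih1 ih2 ih3 ih4 => exact Par.pair ih1 ih2 ih3 ih4
  | @fst t t' p p' m m' ht hp hm iht ihp ihm =>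
    match m, hm, ihm with
    | Tm.pair x y z w, hm, ihm =>
      cases hm with
      | pair hx hy hz hw =>
        cases ihm with
        | pair ihx ihy ihz ihw =>
          exact Par.proj _ _ _ _ _ ihz
    | Tm.var i, hm, ihm => exact Par.fst iht ihp ihm
    | Tm.app x y, hm, ihm => exact Par.fst iht ihp ihm
    | Tm.lam x y, hm, ihm => exact Par.fst iht ihp ihm
    | Tm.fst x y z, hm, ihm => exact Par.fst iht ihp ihm
    | Tm.snd x y z, hm, ihm => exact Par.fst iht ihp ihm
  | snd _ _ _ ih1 ih2 ih3 => exact Par.snd ih1 ih2 ih3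
  | beta t _ _ ihm ihn => exact Par.subst' ihn ihm 0
  | proj t₀ p₀ t₁ p₁ hh _ ihm => exact ihm

theorem par_diamond {a b c : Tm} (h1 : Par a b) (h2 : Par a c) :
    ∃ d, Par b d ∧ Par c d :=
  ⟨cd a, par_cd h1, par_cd h2⟩

end Tm
namespace Tm

open Relation

/-- Multi-step congruence helpers. -/
theorem steps_appL {m m' : Tm} (n : Tm) (h : ReflTransGen Step m m') :
    ReflTransGen Step (app m n) (app m' n) :=
  ReflTransGen.lift (fun x => app x n) (fun _ _ h => Step.appL n h) _ _ h

theorem steps_appR (m : Tm) {n n' : Tm} (h : ReflTransGen Step n n') :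
    ReflTransGen Step (app m n) (app m n') :=
  ReflTransGen.lift (fun x => app m x) (fun _ _ h => Step.appR m h) _ _ h

theorem steps_app {m m' n n' : Tm} (h1 : ReflTransGen Step m m')
    (h2 : ReflTransGen Step n n') : ReflTransGen Step (app m n) (app m' n') :=
  (steps_appL n h1).trans (steps_appR m' h2)

theorem steps_lam {t t' m m' : Tm} (h1 : ReflTransGen Step t t')
    (h2 : ReflTransGen Step m m') : ReflTransGen Step (lam t m) (lam t' m') :=
  (ReflTransGen.lift (fun x => lam x m) (fun _ _ h => Step.lamT m h) _ _ h1).trans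
    (ReflTransGen.lift (fun x => lam t' x) (fun _ _ h => Step.lamM t' h) _ _ h2)

theorem steps_pair {t t' p p' m m' h h' : Tm} (h1 : ReflTransGen Step t t')
    (h2 : ReflTransGen Step p p') (h3 : ReflTransGen Step m m')
    (h4 : ReflTransGen Step h h') :
    ReflTransGen Step (pair t p m h) (pair t' p' m' h') :=
  (ReflTransGen.lift (fun x => pair x p m h) (fun _ _ hh => Step.pair₁ p m h hh) _ _ h1).trans
    ((ReflTransGen.lift (fun x => pair t' x m h) (fun _ _ hh => Step.pair₂ t' m h hh) _ _ h2).trans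
      ((ReflTransGen.lift (fun x => pair t' p' x h) (fun _ _ hh => Step.pair₃ t' p' h hh) _ _ h3).trans
        (ReflTransGen.lift (fun x => pair t' p' m' x) (fun _ _ hh => Step.pair₄ t' p' m' hh) _ _ h4)))

theorem steps_fst {t t' p p' m m' : Tm} (h1 : ReflTransGen Step t t')
    (h2 : ReflTransGen Step p p') (h3 : ReflTransGen Step m m') :
    ReflTransGen Step (fst t p m) (fst t' p' m') :=
  (ReflTransGen.lift (fun x => fst x p m) (fun _ _ hh => Step.fst₁ p m hh) _ _ h1).trans
    ((ReflTransGen.lift (fun x => fst t' x m) (fun _ _ hh => Step.fst₂ t' m hh) _ _ h2).trans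
      (ReflTransGen.lift (fun x => fst t' p' x) (fun _ _ hh => Step.fst₃ t' p' hh) _ _ h3))

theorem steps_snd {t t' p p' m m' : Tm} (h1 : ReflTransGen Step t t')
    (h2 : ReflTransGen Step p p') (h3 : ReflTransGen Step m m') :
    ReflTransGen Step (snd t p m) (snd t' p' m') :=
  (ReflTransGen.lift (fun x => snd x p m) (fun _ _ hh => Step.snd₁ p m hh) _ _ h1).trans
    ((ReflTransGen.lift (fun x => snd t' x m) (fun _ _ hh => Step.snd₂ t' m hh) _ _ h2).trans
      (ReflTransGen.lift (fun x => snd t' p' x) (fun _ _ hh => Step.snd₃ t' p' hh) _ _ h3))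

theorem step_par {a b : Tm} (h : Step a b) : Par a b := by
  induction h with
  | beta t m n => exact Par.beta t (Par.refl m) (Par.refl n)
  | proj t₀ p₀ t₁ p₁ m h => exact Par.proj _ _ _ _ _ (Par.refl m)
  | appL n _ ih => exact Par.app ih (Par.refl n)
  | appR m _ ih => exact Par.app (Par.refl m) ih
  | lamT m _ ih => exact Par.lam ih (Par.refl m)
  | lamM t _ ih => exact Par.lam (Par.refl t) ih
  | pair₁ p m h _ ih => exact Par.pair ih (Par.refl p) (Par.refl m) (Par.refl h)
  | pair₂ t m h _ ih => exact Par.pair (Par.refl t) ih (Par.refl m) (Par.refl h)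
  | pair₃ t p h _ ih => exact Par.pair (Par.refl t) (Par.refl p) ih (Par.refl h)
  | pair₄ t p m _ ih => exact Par.pair (Par.refl t) (Par.refl p) (Par.refl m) ih
  | fst₁ p m _ ih => exact Par.fst ih (Par.refl p) (Par.refl m)
  | fst₂ t m _ ih => exact Par.fst (Par.refl t) ih (Par.refl m)
  | fst₃ t p _ ih => exact Par.fst (Par.refl t) (Par.refl p) ih
  | snd₁ p m _ ih => exact Par.snd ih (Par.refl p) (Par.refl m)
  | snd₂ t m _ ih => exact Par.snd (Par.refl t) ih (Par.refl m)
  | snd₃ t p _ ih => exact Par.snd (Par.refl t) (Par.refl p) ih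

theorem par_steps {a b : Tm} (h : Par a b) : ReflTransGen Step a b := by
  induction h with
  | var n => exact ReflTransGen.refl
  | app _ _ ihm ihn => exact steps_app ihm ihn
  | lam _ _ iht ihm => exact steps_lam iht ihm
  | pair _ _ _ _ ih1 ih2 ih3 ih4 => exact steps_pair ih1 ih2 ih3 ih4
  | fst _ _ _ ih1 ih2 ih3 => exact steps_fst ih1 ih2 ih3
  | snd _ _ _ ih1 ih2 ih3 => exact steps_snd ih1 ih2 ih3
  | @beta t m m' n n' _ _ ihm ihn =>
    exact (steps_app (steps_lam ReflTransGen.refl ihm) ihn).trans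
      (ReflTransGen.single (Step.beta t m' n'))
  | @proj t₀ p₀ t₁ p₁ h m m' _ ihm =>
    exact (steps_fst ReflTransGen.refl ReflTransGen.refl
      (steps_pair ReflTransGen.refl ReflTransGen.refl ihm ReflTransGen.refl)).trans
      (ReflTransGen.single (Step.proj t₀ p₀ t₁ p₁ m' h))

theorem par_strip {a b c : Tm} (h1 : Par a b) (h2 : ReflTransGen Par a c) :
    ∃ d, ReflTransGen Par b d ∧ Par c d := by
  induction h2 with
  | refl => exact ⟨b, ReflTransGen.refl, h1⟩
  | tail _ hcc ih =>
    obtain ⟨d, hbd, hcd⟩ := ih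
    obtain ⟨e, hce, hde⟩ := par_diamond hcc hcd
    exact ⟨e, hbd.tail hde, hce⟩

theorem par_confluent {a b c : Tm} (h1 : ReflTransGen Par a b)
    (h2 : ReflTransGen Par a c) : ∃ d, ReflTransGen Par b d ∧ ReflTransGen Par c d := by
  induction h1 with
  | refl => exact ⟨c, h2, ReflTransGen.refl⟩
  | tail _ hbb ih =>
    obtain ⟨d, hbd, hcd⟩ := ih
    obtain ⟨e, hbe, hde⟩ := par_strip hbb hbd
    exact ⟨e, hbe, hcd.trans (ReflTransGen.single hde)⟩

theorem pars_steps {a b : Tm} (h : ReflTransGen Par a b) : ReflTransGen Step a b := by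
  induction h with
  | refl => exact ReflTransGen.refl
  | tail _ hp ih => exact ih.trans (par_steps hp)

theorem steps_confluent {a b c : Tm} (h1 : ReflTransGen Step a b)
    (h2 : ReflTransGen Step a c) : ∃ d, ReflTransGen Step b d ∧ ReflTransGen Step c d := by
  obtain ⟨d, hbd, hcd⟩ := par_confluent
    (ReflTransGen.lift id (fun _ _ h => step_par h) _ _ h1)
    (ReflTransGen.lift id (fun _ _ h => step_par h) _ _ h2)
  exact ⟨d, pars_steps hbd, pars_steps hcd⟩

end Tm
namespace Tm

open Relation

theorem PiStep.symm {a b : Tm} (h : PiStep a b) : PiStep b a := by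
  induction h with
  | pi t p m h₀ h₁ => exact PiStep.pi t p m h₁ h₀
  | appL n _ ih => exact PiStep.appL n ih
  | appR m _ ih => exact PiStep.appR m ih
  | lamT m _ ih => exact PiStep.lamT m ih
  | lamM t _ ih => exact PiStep.lamM t ih
  | pair₁ p m h _ ih => exact PiStep.pair₁ p m h ih
  | pair₂ t m h _ ih => exact PiStep.pair₂ t m h ih
  | pair₃ t p h _ ih => exact PiStep.pair₃ t p h ih
  | fst₁ p m _ ih => exact PiStep.fst₁ p m ih
  | fst₂ t m _ ih => exact PiStep.fst₂ t m ih
  | fst₃ t p _ ih => exact PiStep.fst₃ t p ih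
  | snd₁ p m _ ih => exact PiStep.snd₁ p m ih
  | snd₂ t m _ ih => exact PiStep.snd₂ t m ih
  | snd₃ t p _ ih => exact PiStep.snd₃ t p ih

theorem pis_symm {a b : Tm} (h : ReflTransGen PiStep a b) : ReflTransGen PiStep b a := by
  induction h with
  | refl => exact ReflTransGen.refl
  | tail _ hp ih => exact (ReflTransGen.single hp.symm).trans ih

theorem PiStep.lift {a b : Tm} (h : PiStep a b) : ∀ d k, PiStep (lift d k a) (lift d k b) := by
  induction h with
  | pi t p m h₀ h₁ =>
    intro d k
    exact PiStep.pi _ _ _ _ _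
  | appL n _ ih => intro d k; exact PiStep.appL _ (ih d k)
  | appR m _ ih => intro d k; exact PiStep.appR _ (ih d k)
  | lamT m _ ih => intro d k; exact PiStep.lamT _ (ih d k)
  | lamM t _ ih => intro d k; exact PiStep.lamM _ (ih d (k+1))
  | pair₁ p m h _ ih => intro d k; exact PiStep.pair₁ _ _ _ (ih d k)
  | pair₂ t m h _ ih => intro d k; exact PiStep.pair₂ _ _ _ (ih d k)
  | pair₃ t p h _ ih => intro d k; exact PiStep.pair₃ _ _ _ (ih d k)
  | fst₁ p m _ ih => intro d k; exact PiStep.fst₁ _ _ (ih d k)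
  | fst₂ t m _ ih => intro d k; exact PiStep.fst₂ _ _ (ih d k)
  | fst₃ t p _ ih => intro d k; exact PiStep.fst₃ _ _ (ih d k)
  | snd₁ p m _ ih => intro d k; exact PiStep.snd₁ _ _ (ih d k)
  | snd₂ t m _ ih => intro d k; exact PiStep.snd₂ _ _ (ih d k)
  | snd₃ t p _ ih => intro d k; exact PiStep.snd₃ _ _ (ih d k)

theorem PiStep.subst {a b : Tm} (h : PiStep a b) (s : Tm) :
    ∀ k, PiStep (subst k s a) (subst k s b) := by
  induction h with
  | pi t p m h₀ h₁ => intro k; exact PiStep.pi _ _ _ _ _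
  | appL n _ ih => intro k; exact PiStep.appL _ (ih k)
  | appR m _ ih => intro k; exact PiStep.appR _ (ih k)
  | lamT m _ ih => intro k; exact PiStep.lamT _ (ih k)
  | lamM t _ ih => intro k; exact PiStep.lamM _ (ih (k+1))
  | pair₁ p m h _ ih => intro k; exact PiStep.pair₁ _ _ _ (ih k)
  | pair₂ t m h _ ih => intro k; exact PiStep.pair₂ _ _ _ (ih k)
  | pair₃ t p h _ ih => intro k; exact PiStep.pair₃ _ _ _ (ih k)
  | fst₁ p m _ ih => intro k; exact PiStep.fst₁ _ _ (ih k)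
  | fst₂ t m _ ih => intro k; exact PiStep.fst₂ _ _ (ih k)
  | fst₃ t p _ ih => intro k; exact PiStep.fst₃ _ _ (ih k)
  | snd₁ p m _ ih => intro k; exact PiStep.snd₁ _ _ (ih k)
  | snd₂ t m _ ih => intro k; exact PiStep.snd₂ _ _ (ih k)
  | snd₃ t p _ ih => intro k; exact PiStep.snd₃ _ _ (ih k)

/-- Multi-step pi congruence helpers. -/
theorem pis_appL {m m' : Tm} (n : Tm) (h : ReflTransGen PiStep m m') :
    ReflTransGen PiStep (app m n) (app m' n) :=
  ReflTransGen.lift (fun x => app x n) (fun _ _ h => PiStep.appL n h) _ _ h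

theorem pis_appR (m : Tm) {n n' : Tm} (h : ReflTransGen PiStep n n') :
    ReflTransGen PiStep (app m n) (app m n') :=
  ReflTransGen.lift (fun x => app m x) (fun _ _ h => PiStep.appR m h) _ _ h

theorem pis_app {m m' n n' : Tm} (h1 : ReflTransGen PiStep m m')
    (h2 : ReflTransGen PiStep n n') : ReflTransGen PiStep (app m n) (app m' n') :=
  (pis_appL n h1).trans (pis_appR m' h2)

theorem pis_lam {t t' m m' : Tm} (h1 : ReflTransGen PiStep t t')
    (h2 : ReflTransGen PiStep m m') : ReflTransGen PiStep (lam t m) (lam t' m') :=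
  (ReflTransGen.lift (fun x => lam x m) (fun _ _ h => PiStep.lamT m h) _ _ h1).trans
    (ReflTransGen.lift (fun x => lam t' x) (fun _ _ h => PiStep.lamM t' h) _ _ h2)

/-- Note: no relation needed between the proof components. -/
theorem pis_pair {t t' p p' m m' : Tm} (h h' : Tm) (h1 : ReflTransGen PiStep t t')
    (h2 : ReflTransGen PiStep p p') (h3 : ReflTransGen PiStep m m') :
    ReflTransGen PiStep (pair t p m h) (pair t' p' m' h') :=
  (ReflTransGen.lift (fun x => pair x p m h) (fun _ _ hh => PiStep.pair₁ p m h hh) _ _ h1).trans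
    ((ReflTransGen.lift (fun x => pair t' x m h) (fun _ _ hh => PiStep.pair₂ t' m h hh) _ _ h2).trans
      ((ReflTransGen.lift (fun x => pair t' p' x h) (fun _ _ hh => PiStep.pair₃ t' p' h hh) _ _ h3).trans
        (ReflTransGen.single (PiStep.pi t' p' m' h h'))))

theorem pis_fst {t t' p p' m m' : Tm} (h1 : ReflTransGen PiStep t t')
    (h2 : ReflTransGen PiStep p p') (h3 : ReflTransGen PiStep m m') :
    ReflTransGen PiStep (fst t p m) (fst t' p' m') :=
  (ReflTransGen.lift (fun x => fst x p m) (fun _ _ hh => PiStep.fst₁ p m hh) _ _ h1).trans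
    ((ReflTransGen.lift (fun x => fst t' x m) (fun _ _ hh => PiStep.fst₂ t' m hh) _ _ h2).trans
      (ReflTransGen.lift (fun x => fst t' p' x) (fun _ _ hh => PiStep.fst₃ t' p' hh) _ _ h3))

theorem pis_snd {t t' p p' m m' : Tm} (h1 : ReflTransGen PiStep t t')
    (h2 : ReflTransGen PiStep p p') (h3 : ReflTransGen PiStep m m') :
    ReflTransGen PiStep (snd t p m) (snd t' p' m') :=
  (ReflTransGen.lift (fun x => snd x p m) (fun _ _ hh => PiStep.snd₁ p m hh) _ _ h1).trans
    ((ReflTransGen.lift (fun x => snd t' x m) (fun _ _ hh => PiStep.snd₂ t' m hh) _ _ h2).trans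
      (ReflTransGen.lift (fun x => snd t' p' x) (fun _ _ hh => PiStep.snd₃ t' p' hh) _ _ h3))

/-- Substituting pi-related arguments. -/
theorem pis_subst_arg {n n' : Tm} (h : PiStep n n') (m : Tm) :
    ∀ k, ReflTransGen PiStep (subst k n m) (subst k n' m) := by
  induction m with
  | var v =>
    intro k
    by_cases hv : v = k
    · simp only [Tm.subst, if_pos hv]
      exact ReflTransGen.single (h.lift k 0)
    · simp only [Tm.subst, if_neg hv]
      split_ifs <;> exact ReflTransGen.refl
  | app a b iha ihb =>
    intro k
    exact pis_app (iha k) (ihb k)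
  | lam a b iha ihb =>
    intro k
    exact pis_lam (iha k) (ihb (k+1))
  | pair a b c d iha ihb ihc ihd =>
    intro k
    exact pis_pair _ _ (iha k) (ihb k) (ihc k)
  | fst a b c iha ihb ihc =>
    intro k
    exact pis_fst (iha k) (ihb k) (ihc k)
  | snd a b c iha ihb ihc =>
    intro k
    exact pis_snd (iha k) (ihb k) (ihc k)

end Tm
namespace Tm

open Relation

theorem rg_lift {f : Tm → Tm} (hf : ∀ {a b : Tm}, Step a b → Step (f a) (f b))
    {a b : Tm} (h : ReflGen Step a b) : ReflGen Step (f a) (f b) := by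
  cases h with
  | refl => exact ReflGen.refl
  | single h => exact ReflGen.single (hf h)

theorem comm1 {x x' : Tm} (hs : Step x x') :
    ∀ y, PiStep x y → ∃ y', ReflGen Step y y' ∧ ReflTransGen PiStep x' y' := by
  induction hs with
  | beta t m n =>
    intro y hp
    cases hp with
    | appL _ h =>
      cases h with
      | lamT _ h =>
        exact ⟨subst 0 n m, ReflGen.single (Step.beta _ m n), ReflTransGen.refl⟩
      | lamM _ h =>
        exact ⟨subst 0 n _, ReflGen.single (Step.beta t _ n),
          ReflTransGen.single (h.subst n 0)⟩
    | appR _ h =>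
      exact ⟨subst 0 _ m, ReflGen.single (Step.beta t m _), pis_subst_arg h m 0⟩
  | proj t₀ p₀ t₁ p₁ m h =>
    intro y hp
    cases hp with
    | fst₁ _ _ h' => exact ⟨m, ReflGen.single (Step.proj _ _ _ _ _ _), ReflTransGen.refl⟩
    | fst₂ _ _ h' => exact ⟨m, ReflGen.single (Step.proj _ _ _ _ _ _), ReflTransGen.refl⟩
    | fst₃ _ _ h' =>
      cases h' with
      | pi => exact ⟨m, ReflGen.single (Step.proj _ _ _ _ _ _), ReflTransGen.refl⟩
      | pair₁ _ _ _ h'' => exact ⟨m, ReflGen.single (Step.proj _ _ _ _ _ _), ReflTransGen.refl⟩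
      | pair₂ _ _ _ h'' => exact ⟨m, ReflGen.single (Step.proj _ _ _ _ _ _), ReflTransGen.refl⟩
      | pair₃ _ _ _ h'' =>
        exact ⟨_, ReflGen.single (Step.proj _ _ _ _ _ _), ReflTransGen.single h''⟩
  | @appL m m' n hs ih =>
    intro y hp
    cases hp with
    | appL _ h =>
      obtain ⟨y', hy1, hy2⟩ := ih _ h
      exact ⟨app y' n, rg_lift (fun h => Step.appL n h) hy1, pis_appL n hy2⟩
    | appR _ h =>
      exact ⟨app m' _, ReflGen.single (Step.appL _ hs), ReflTransGen.single (PiStep.appR m' h)⟩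
  | @appR m n n' hs ih =>
    intro y hp
    cases hp with
    | appL _ h =>
      exact ⟨app _ n', ReflGen.single (Step.appR _ hs), ReflTransGen.single (PiStep.appL n' h)⟩
    | appR _ h =>
      obtain ⟨y', hy1, hy2⟩ := ih _ h
      exact ⟨app m y', rg_lift (fun h => Step.appR m h) hy1, pis_appR m hy2⟩
  | @lamT t t' m hs ih =>
    intro y hp
    cases hp with
    | lamT _ h =>
      obtain ⟨y', hy1, hy2⟩ := ih _ h
      exact ⟨lam y' m, rg_lift (fun h => Step.lamT m h) hy1,
        ReflTransGen.lift (fun x => lam x m) (fun _ _ h => PiStep.lamT m h) _ _ hy2⟩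
    | lamM _ h =>
      exact ⟨lam t' _, ReflGen.single (Step.lamT _ hs), ReflTransGen.single (PiStep.lamM t' h)⟩
  | @lamM t m m' hs ih =>
    intro y hp
    cases hp with
    | lamT _ h =>
      exact ⟨lam _ m', ReflGen.single (Step.lamM _ hs), ReflTransGen.single (PiStep.lamT m' h)⟩
    | lamM _ h =>
      obtain ⟨y', hy1, hy2⟩ := ih _ h
      exact ⟨lam t y', rg_lift (fun h => Step.lamM t h) hy1,
        ReflTransGen.lift (fun x => lam t x) (fun _ _ h => PiStep.lamM t h) _ _ hy2⟩
  | @pair₁ t t' p m h hs ih =>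
    intro y hp
    cases hp with
    | pi =>
      exact ⟨pair t' p m _, ReflGen.single (Step.pair₁ _ _ _ hs),
        ReflTransGen.single (PiStep.pi _ _ _ _ _)⟩
    | pair₁ _ _ _ h' =>
      obtain ⟨y', hy1, hy2⟩ := ih _ h'
      exact ⟨pair y' p m h, rg_lift (fun h => Step.pair₁ p m _ h) hy1,
        ReflTransGen.lift (fun x => pair x p m h) (fun _ _ h => PiStep.pair₁ p m _ h) _ _ hy2⟩
    | pair₂ _ _ _ h' =>
      exact ⟨pair t' _ m h, ReflGen.single (Step.pair₁ _ _ _ hs),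
        ReflTransGen.single (PiStep.pair₂ t' m h h')⟩
    | pair₃ _ _ _ h' =>
      exact ⟨pair t' p _ h, ReflGen.single (Step.pair₁ _ _ _ hs),
        ReflTransGen.single (PiStep.pair₃ t' p h h')⟩
  | @pair₂ t p p' m h hs ih =>
    intro y hp
    cases hp with
    | pi =>
      exact ⟨pair t p' m _, ReflGen.single (Step.pair₂ _ _ _ hs),
        ReflTransGen.single (PiStep.pi _ _ _ _ _)⟩
    | pair₁ _ _ _ h' =>
      exact ⟨pair _ p' m h, ReflGen.single (Step.pair₂ _ _ _ hs),
        ReflTransGen.single (PiStep.pair₁ p' m h h')⟩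
    | pair₂ _ _ _ h' =>
      obtain ⟨y', hy1, hy2⟩ := ih _ h'
      exact ⟨pair t y' m h, rg_lift (fun h => Step.pair₂ t m _ h) hy1,
        ReflTransGen.lift (fun x => pair t x m h) (fun _ _ h => PiStep.pair₂ t m _ h) _ _ hy2⟩
    | pair₃ _ _ _ h' =>
      exact ⟨pair t p' _ h, ReflGen.single (Step.pair₂ _ _ _ hs),
        ReflTransGen.single (PiStep.pair₃ t p' h h')⟩
  | @pair₃ t p m m' h hs ih =>
    intro y hp
    cases hp with
    | pi =>
      exact ⟨pair t p m' _, ReflGen.single (Step.pair₃ _ _ _ hs),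
        ReflTransGen.single (PiStep.pi _ _ _ _ _)⟩
    | pair₁ _ _ _ h' =>
      exact ⟨pair _ p m' h, ReflGen.single (Step.pair₃ _ _ _ hs),
        ReflTransGen.single (PiStep.pair₁ p m' h h')⟩
    | pair₂ _ _ _ h' =>
      exact ⟨pair t _ m' h, ReflGen.single (Step.pair₃ _ _ _ hs),
        ReflTransGen.single (PiStep.pair₂ t m' h h')⟩
    | pair₃ _ _ _ h' =>
      obtain ⟨y', hy1, hy2⟩ := ih _ h'
      exact ⟨pair t p y' h, rg_lift (fun h => Step.pair₃ t p _ h) hy1,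
        ReflTransGen.lift (fun x => pair t p x h) (fun _ _ h => PiStep.pair₃ t p _ h) _ _ hy2⟩
  | @pair₄ t p m h h' hs ih =>
    intro y hp
    cases hp with
    | pi =>
      exact ⟨_, ReflGen.refl, ReflTransGen.single (PiStep.pi _ _ _ _ _)⟩
    | pair₁ _ _ _ hq =>
      exact ⟨pair _ p m h', ReflGen.single (Step.pair₄ _ _ _ hs),
        ReflTransGen.single (PiStep.pair₁ p m h' hq)⟩
    | pair₂ _ _ _ hq =>
      exact ⟨pair t _ m h', ReflGen.single (Step.pair₄ _ _ _ hs),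
        ReflTransGen.single (PiStep.pair₂ t m h' hq)⟩
    | pair₃ _ _ _ hq =>
      exact ⟨pair t p _ h', ReflGen.single (Step.pair₄ _ _ _ hs),
        ReflTransGen.single (PiStep.pair₃ t p h' hq)⟩
  | @fst₁ t t' p m hs ih =>
    intro y hp
    cases hp with
    | fst₁ _ _ h' =>
      obtain ⟨y', hy1, hy2⟩ := ih _ h'
      exact ⟨fst y' p m, rg_lift (fun h => Step.fst₁ p m h) hy1,
        ReflTransGen.lift (fun x => fst x p m) (fun _ _ h => PiStep.fst₁ p m h) _ _ hy2⟩
    | fst₂ _ _ h' =>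
      exact ⟨fst t' _ m, ReflGen.single (Step.fst₁ _ _ hs),
        ReflTransGen.single (PiStep.fst₂ t' m h')⟩
    | fst₃ _ _ h' =>
      exact ⟨fst t' p _, ReflGen.single (Step.fst₁ _ _ hs),
        ReflTransGen.single (PiStep.fst₃ t' p h')⟩
  | @fst₂ t p p' m hs ih =>
    intro y hp
    cases hp with
    | fst₁ _ _ h' =>
      exact ⟨fst _ p' m, ReflGen.single (Step.fst₂ _ _ hs),
        ReflTransGen.single (PiStep.fst₁ p' m h')⟩
    | fst₂ _ _ h' =>
      obtain ⟨y', hy1, hy2⟩ := ih _ h'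
      exact ⟨fst t y' m, rg_lift (fun h => Step.fst₂ t m h) hy1,
        ReflTransGen.lift (fun x => fst t x m) (fun _ _ h => PiStep.fst₂ t m h) _ _ hy2⟩
    | fst₃ _ _ h' =>
      exact ⟨fst t p' _, ReflGen.single (Step.fst₂ _ _ hs),
        ReflTransGen.single (PiStep.fst₃ t p' h')⟩
  | @fst₃ t p m m' hs ih =>
    intro y hp
    cases hp with
    | fst₁ _ _ h' =>
      exact ⟨fst _ p m', ReflGen.single (Step.fst₃ _ _ hs),
        ReflTransGen.single (PiStep.fst₁ p m' h')⟩
    | fst₂ _ _ h' =>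
      exact ⟨fst t _ m', ReflGen.single (Step.fst₃ _ _ hs),
        ReflTransGen.single (PiStep.fst₂ t m' h')⟩
    | fst₃ _ _ h' =>
      obtain ⟨y', hy1, hy2⟩ := ih _ h'
      exact ⟨fst t p y', rg_lift (fun h => Step.fst₃ t p h) hy1,
        ReflTransGen.lift (fun x => fst t p x) (fun _ _ h => PiStep.fst₃ t p h) _ _ hy2⟩
  | @snd₁ t t' p m hs ih =>
    intro y hp
    cases hp with
    | snd₁ _ _ h' =>
      obtain ⟨y', hy1, hy2⟩ := ih _ h'
      exact ⟨snd y' p m, rg_lift (fun h => Step.snd₁ p m h) hy1,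
        ReflTransGen.lift (fun x => snd x p m) (fun _ _ h => PiStep.snd₁ p m h) _ _ hy2⟩
    | snd₂ _ _ h' =>
      exact ⟨snd t' _ m, ReflGen.single (Step.snd₁ _ _ hs),
        ReflTransGen.single (PiStep.snd₂ t' m h')⟩
    | snd₃ _ _ h' =>
      exact ⟨snd t' p _, ReflGen.single (Step.snd₁ _ _ hs),
        ReflTransGen.single (PiStep.snd₃ t' p h')⟩
  | @snd₂ t p p' m hs ih =>
    intro y hp
    cases hp with
    | snd₁ _ _ h' =>
      exact ⟨snd _ p' m, ReflGen.single (Step.snd₂ _ _ hs),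
        ReflTransGen.single (PiStep.snd₁ p' m h')⟩
    | snd₂ _ _ h' =>
      obtain ⟨y', hy1, hy2⟩ := ih _ h'
      exact ⟨snd t y' m, rg_lift (fun h => Step.snd₂ t m h) hy1,
        ReflTransGen.lift (fun x => snd t x m) (fun _ _ h => PiStep.snd₂ t m h) _ _ hy2⟩
    | snd₃ _ _ h' =>
      exact ⟨snd t p' _, ReflGen.single (Step.snd₂ _ _ hs),
        ReflTransGen.single (PiStep.snd₃ t p' h')⟩
  | @snd₃ t p m m' hs ih =>
    intro y hp
    cases hp with
    | snd₁ _ _ h' =>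
      exact ⟨snd _ p m', ReflGen.single (Step.snd₃ _ _ hs),
        ReflTransGen.single (PiStep.snd₁ p m' h')⟩
    | snd₂ _ _ h' =>
      exact ⟨snd t _ m', ReflGen.single (Step.snd₃ _ _ hs),
        ReflTransGen.single (PiStep.snd₂ t m' h')⟩
    | snd₃ _ _ h' =>
      obtain ⟨y', hy1, hy2⟩ := ih _ h'
      exact ⟨snd t p y', rg_lift (fun h => Step.snd₃ t p h) hy1,
        ReflTransGen.lift (fun x => snd t p x) (fun _ _ h => PiStep.snd₃ t p h) _ _ hy2⟩

end Tm
namespace Tm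

open Relation

theorem commP1 {x y : Tm} (hp : ReflTransGen PiStep x y) :
    ∀ x', Step x x' → ∃ y', ReflGen Step y y' ∧ ReflTransGen PiStep x' y' := by
  induction hp using ReflTransGen.head_induction_on with
  | refl =>
    intro x' hs
    exact ⟨x', ReflGen.single hs, ReflTransGen.refl⟩
  | head hxz hzy ih =>
    intro x' hs
    obtain ⟨z', hz1, hz2⟩ := comm1 hs _ hxz
    cases hz1 with
    | refl => exact ⟨_, ReflGen.refl, hz2.trans hzy⟩
    | single hstep =>
      obtain ⟨y', hy1, hy2⟩ := ih _ hstep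
      exact ⟨y', hy1, hz2.trans hy2⟩

theorem commP {x x' : Tm} (hs : ReflTransGen Step x x') :
    ∀ y, ReflTransGen PiStep x y →
      ∃ y', ReflTransGen Step y y' ∧ ReflTransGen PiStep x' y' := by
  induction hs using ReflTransGen.head_induction_on with
  | refl =>
    intro y hp
    exact ⟨y, ReflTransGen.refl, hp⟩
  | head hxc hcx' ih =>
    intro y hp
    obtain ⟨y₁, hy1, hy2⟩ := commP1 hp _ hxc
    obtain ⟨y', hy1', hy2'⟩ := ih _ hy2
    refine ⟨y', ?_, hy2'⟩
    cases hy1 with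
    | refl => exact hy1'
    | single h => exact (ReflTransGen.single h).trans hy1'

end Tm

open Relation

/-- The full PVS-Cert conversion — the equivalence generated by β, projection
and proof irrelevance — is contained in `→βπ* ∘ =pi ∘ ←βπ*`. -/
theorem Tm.conversion_decomposition :
    ∀ t u : Tm, EqvGen (fun x y => Tm.Step x y ∨ Tm.PiStep x y) t u →
      ∃ t' u', ReflTransGen Tm.Step t t' ∧ ReflTransGen Tm.PiStep t' u' ∧
        ReflTransGen Tm.Step u u' := by
  intro t u h
  induction h with
  | rel a b hab =>
    cases hab with
    | inl hs => exact ⟨b, b, ReflTransGen.single hs, ReflTransGen.refl, ReflTransGen.refl⟩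
    | inr hp => exact ⟨a, b, ReflTransGen.refl, ReflTransGen.single hp, ReflTransGen.refl⟩
  | refl a => exact ⟨a, a, ReflTransGen.refl, ReflTransGen.refl, ReflTransGen.refl⟩
  | symm a b _ ih =>
    obtain ⟨t', u', h1, h2, h3⟩ := ih
    exact ⟨u', t', h3, Tm.pis_symm h2, h1⟩
  | trans a b c _ _ ih1 ih2 =>
    obtain ⟨t₁, u₁, ha1, hp1, hb1⟩ := ih1
    obtain ⟨u₂, v₁, hb2, hp2, hc2⟩ := ih2
    obtain ⟨w, hw1, hw2⟩ := Tm.steps_confluent hb1 hb2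
    obtain ⟨t₂, ht2, hwt⟩ := Tm.commP hw1 t₁ (Tm.pis_symm hp1)
    obtain ⟨v₂, hv2, hwv⟩ := Tm.commP hw2 v₁ hp2
    exact ⟨t₂, v₂, ha1.trans ht2, (Tm.pis_symm hwt).trans hwv, hc2.trans hv2⟩
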